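/- Let C : [0,1] → ℝ be continuously differentiable such that t ↦ t·C'(t) is strictly increasing on [0,1]. Let l ∈ (0, 1/6), r = 1 − 2l, c = l·r², let λ and M be as defined, and set f̂(s) = ∫₀^s λ(t)·C'(t·λ(t)) dt for s ∈ [0,1]. Then every point of M is a maximum point of the function T(x,y,z) = f̂(x) + f̂(y) + f̂(z) − C(x·y·z) on [0,1]³: for all (x,y,z) ∈ M and all (a,b,d) ∈ [0,1]³, f̂(a) + f̂(b) + f̂(d) − C(a·b·d) ≤ f̂(x) + f̂(y) + f̂(z) − C(x·y·z). -/

import Mathlib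

open Set intervalIntegral

/-- The piecewise function `λ`: `(1−2x)²` on `[0, l)`, `c/x` on `[l, r)` and `x(1−x)/2` on
`[r, 1]`, where `r = 1 − 2l` and `c = l·r²`. -/
noncomputable def lam (l : ℝ) (x : ℝ) : ℝ :=
  if x < l then (1 - 2*x)^2
  else if x < 1 - 2*l then (l * (1 - 2*l)^2) / x
  else x * (1 - x) / 2

/-- The set `M ⊆ [0,1]³`: the union of the three segments
`Mx = {(t, 1−2t, 1−2t) : 0 ≤ t ≤ l}`, `My = {(1−2t, t, 1−2t) : 0 ≤ t ≤ l}`,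
`Mz = {(1−2t, 1−2t, t) : 0 ≤ t ≤ l}` and the two-dimensional piece
`M₂ = {(x,y,z) : l ≤ x,y,z ≤ 1−2l, xyz = l(1−2l)²}`. -/
def Mset (l : ℝ) : Set (ℝ × ℝ × ℝ) :=
  {p | ∃ t, 0 ≤ t ∧ t ≤ l ∧
    (p = (t, 1 - 2*t, 1 - 2*t) ∨ p = (1 - 2*t, t, 1 - 2*t) ∨ p = (1 - 2*t, 1 - 2*t, t))} ∪
  {p | l ≤ p.1 ∧ p.1 ≤ 1 - 2*l ∧ l ≤ p.2.1 ∧ p.2.1 ≤ 1 - 2*l ∧ l ≤ p.2.2 ∧ p.2.2 ≤ 1 - 2*l ∧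
    p.1 * p.2.1 * p.2.2 = l * (1 - 2*l)^2}

/-- The potential `f̂(s) = ∫₀^s λ(t)·C'(t·λ(t)) dt`. -/
noncomputable def fhat (l : ℝ) (C' : ℝ → ℝ) (s : ℝ) : ℝ :=
  ∫ t in (0 : ℝ)..s, lam l t * C' (t * lam l t)

lemma lam_at_l {l : ℝ} (hl0 : 0 < l) (hl6 : l < 1/6) : lam l l = (1 - 2*l)^2 := by
  have h1 : l < 1 - 2*l := by linarith
  have h2 : ¬ (l < l) := lt_irrefl l
  simp only [lam, h2, if_false, h1, if_true]
  field_simp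

lemma lam_left {l : ℝ} (hl0 : 0 < l) (hl6 : l < 1/6) {x : ℝ} (hx : x ≤ l) :
    lam l x = (1 - 2*x)^2 := by
  rcases lt_or_eq_of_le hx with h | h
  · simp [lam, h]
  · rw [h]; exact lam_at_l hl0 hl6

lemma lam_mid {l : ℝ} (hl0 : 0 < l) (hl6 : l < 1/6) {x : ℝ} (h1 : l ≤ x) (h2 : x ≤ 1 - 2*l) :
    lam l x = (l * (1 - 2*l)^2) / x := by
  rcases lt_or_eq_of_le h2 with h | h
  · simp [lam, not_lt.2 h1, h]
  · have hrl : ¬ (x < l) := by push_neg; linarith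
    have hrr : ¬ (x < 1 - 2*l) := by push_neg; linarith
    simp only [lam, hrl, if_false, hrr]
    have hne : (1:ℝ) - 2*l ≠ 0 := by linarith
    rw [h]
    field_simp
    ring

lemma lam_right {l : ℝ} (hl0 : 0 < l) (hl6 : l < 1/6) {x : ℝ} (h : 1 - 2*l ≤ x) :
    lam l x = x * (1 - x) / 2 := by
  have h1 : ¬ x < l := by push_neg; linarith
  have h2 : ¬ x < 1 - 2*l := not_lt.2 h
  simp [lam, h1, h2]

lemma lam_cont {l : ℝ} (hl0 : 0 < l) (hl6 : l < 1/6) : Continuous (lam l) := by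
  have hlr : l < 1 - 2*l := by linarith
  rw [continuous_iff_continuousAt]
  intro x
  rcases lt_trichotomy x l with hx | hx | hx
  · have : ∀ᶠ y in nhds x, ((1:ℝ) - 2*y)^2 = lam l y := by
      filter_upwards [Iio_mem_nhds hx] with y hy
      exact (lam_left hl0 hl6 (le_of_lt hy)).symm
    exact (Continuous.continuousAt (by continuity)).congr this
  · subst hx
    rw [continuousAt_iff_continuous_left_right]
    constructor
    · exact ((Continuous.continuousAt (by continuity)).continuousWithinAt).congr
        (fun y hy => lam_left hl0 hl6 hy) (lam_left hl0 hl6 le_rfl)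
    · have hcw : ContinuousWithinAt (fun y => (x * (1 - 2*x)^2) / y) (Ici x) x :=
        (ContinuousAt.continuousWithinAt
          (ContinuousAt.div continuousAt_const continuousAt_id (ne_of_gt hl0)))
      refine hcw.congr_of_eventuallyEq ?_ (lam_mid hl0 hl6 le_rfl (le_of_lt hlr))
      filter_upwards [self_mem_nhdsWithin,
        mem_nhdsWithin_of_mem_nhds (Iio_mem_nhds hlr)] with y h1 h2
      exact lam_mid hl0 hl6 h1 (le_of_lt h2)
  · rcases lt_trichotomy x (1 - 2*l) with hx2 | hx2 | hx2
    · have hxpos : (0:ℝ) < x := lt_trans hl0 hx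
      have : ∀ᶠ y in nhds x, (l * (1 - 2*l)^2) / y = lam l y := by
        filter_upwards [Ioo_mem_nhds hx hx2] with y hy
        exact (lam_mid hl0 hl6 (le_of_lt hy.1) (le_of_lt hy.2)).symm
      refine ContinuousAt.congr ?_ this
      exact ContinuousAt.div continuousAt_const continuousAt_id (ne_of_gt hxpos)
    · subst hx2
      have hxpos : (0:ℝ) < 1 - 2*l := lt_trans hl0 hx
      rw [continuousAt_iff_continuous_left_right]
      constructor
      · have hcw : ContinuousWithinAt (fun y => (l * (1 - 2*l)^2) / y) (Iic (1-2*l)) (1-2*l) :=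
          (ContinuousAt.continuousWithinAt
            (ContinuousAt.div continuousAt_const continuousAt_id (ne_of_gt hxpos)))
        refine hcw.congr_of_eventuallyEq ?_ (lam_mid hl0 hl6 (le_of_lt hx) le_rfl)
        filter_upwards [self_mem_nhdsWithin,
          mem_nhdsWithin_of_mem_nhds (Ioi_mem_nhds hx)] with y h1 h2
        exact lam_mid hl0 hl6 (le_of_lt h2) h1
      · exact ((Continuous.continuousAt (by continuity)).continuousWithinAt).congr
          (fun y hy => lam_right hl0 hl6 hy) (lam_right hl0 hl6 le_rfl)
    · have : ∀ᶠ y in nhds x, y * (1 - y) / 2 = lam l y := by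
        filter_upwards [Ioi_mem_nhds hx2] with y hy
        exact (lam_right hl0 hl6 (le_of_lt hy)).symm
      exact (Continuous.continuousAt (by continuity)).congr this

lemma lam_mem {l : ℝ} (hl0 : 0 < l) (hl6 : l < 1/6) {x : ℝ} (hx : x ∈ Icc (0:ℝ) 1) :
    lam l x ∈ Icc (0:ℝ) 1 := by
  obtain ⟨hx0, hx1⟩ := hx
  rcases le_or_gt x l with h | h
  · rw [lam_left hl0 hl6 h]
    exact ⟨by positivity, by nlinarith⟩
  · rcases le_or_gt x (1 - 2*l) with h2 | h2
    · rw [lam_mid hl0 hl6 (le_of_lt h) h2]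
      have hxpos : 0 < x := lt_trans hl0 h
      constructor
      · positivity
      · rw [div_le_one hxpos]
        have hs : (1 - 2*l)^2 ≤ 1 := by nlinarith
        nlinarith
    · rw [lam_right hl0 hl6 (le_of_lt h2)]
      have h3 : (0:ℝ) ≤ 1 - x := by linarith
      exact ⟨by positivity, by nlinarith⟩

lemma G_mem {l : ℝ} (hl0 : 0 < l) (hl6 : l < 1/6) {x : ℝ} (hx : x ∈ Icc (0:ℝ) 1) :
    x * lam l x ∈ Icc (0:ℝ) 1 := by
  have h := lam_mem hl0 hl6 hx
  exact ⟨mul_nonneg hx.1 h.1, mul_le_one₀ hx.2 h.1 h.2⟩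

lemma lam_zero {l : ℝ} (hl0 : 0 < l) (hl6 : l < 1/6) : lam l 0 = 1 := by
  rw [lam_left hl0 hl6 (le_of_lt hl0)]; norm_num

lemma lam_one {l : ℝ} (hl0 : 0 < l) (hl6 : l < 1/6) : lam l 1 = 0 := by
  rw [lam_right hl0 hl6 (by linarith)]; ring

noncomputable def Fe (l : ℝ) (C' : ℝ → ℝ) (s : ℝ) : ℝ :=
  ∫ t in (0:ℝ)..s, lam l t * C' (max 0 (min 1 (t * lam l t)))

lemma proj_mem (u : ℝ) : max 0 (min 1 u) ∈ Icc (0:ℝ) 1 :=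
  ⟨le_max_left _ _, max_le zero_le_one (min_le_left _ _)⟩

lemma proj_eq {u : ℝ} (h : u ∈ Icc (0:ℝ) 1) : max 0 (min 1 u) = u := by
  rw [min_eq_right h.2, max_eq_right h.1]

lemma phi_cont {l : ℝ} (hl0 : 0 < l) (hl6 : l < 1/6) {C' : ℝ → ℝ}
    (hC' : ContinuousOn C' (Icc (0:ℝ) 1)) :
    Continuous (fun t => lam l t * C' (max 0 (min 1 (t * lam l t)))) := by
  have hP : Continuous (fun t : ℝ => max 0 (min 1 (t * lam l t))) :=
    continuous_const.max (continuous_const.min (continuous_id.mul (lam_cont hl0 hl6)))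
  exact (lam_cont hl0 hl6).mul (hC'.comp_continuous hP (fun t => proj_mem _))

lemma Fe_hasDerivAt {l : ℝ} (hl0 : 0 < l) (hl6 : l < 1/6) {C' : ℝ → ℝ}
    (hC' : ContinuousOn C' (Icc (0:ℝ) 1)) (s : ℝ) :
    HasDerivAt (Fe l C') (lam l s * C' (max 0 (min 1 (s * lam l s)))) s :=
  ((phi_cont hl0 hl6 hC').integral_hasStrictDerivAt 0 s).hasDerivAt

lemma Fe_cont {l : ℝ} (hl0 : 0 < l) (hl6 : l < 1/6) {C' : ℝ → ℝ}
    (hC' : ContinuousOn C' (Icc (0:ℝ) 1)) : Continuous (Fe l C') :=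
  continuous_iff_continuousAt.2 fun s => (Fe_hasDerivAt hl0 hl6 hC' s).continuousAt

lemma fhat_eq_Fe {l : ℝ} (hl0 : 0 < l) (hl6 : l < 1/6) (C' : ℝ → ℝ) {s : ℝ}
    (hs : s ∈ Icc (0:ℝ) 1) : fhat l C' s = Fe l C' s := by
  unfold fhat Fe
  apply intervalIntegral.integral_congr
  intro t ht
  rw [uIcc_of_le hs.1] at ht
  have hmem : t * lam l t ∈ Icc (0:ℝ) 1 := G_mem hl0 hl6 ⟨ht.1, le_trans ht.2 hs.2⟩
  show lam l t * C' (t * lam l t) = lam l t * C' (max 0 (min 1 (t * lam l t)))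
  rw [proj_eq hmem]

lemma Gleft_lt {l : ℝ} (hl6 : l < 1/6) {x : ℝ} (h0 : 0 ≤ x) (hx : x < l) :
    x*(1-2*x)^2 < l*(1-2*l)^2 := by
  have h1 : 0 < l - x := by linarith
  have h2 : 0 < 1 - 4*(l+x) + 4*(l^2+l*x+x^2) := by nlinarith
  nlinarith [mul_pos h1 h2]

lemma Gright_lt {l : ℝ} (hl0 : 0 < l) (hl6 : l < 1/6) {x : ℝ} (hx : 1 - 2*l < x) (hx1 : x ≤ 1) :
    x*(x*(1-x)/2) < l*(1-2*l)^2 := by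
  have hr : (2:ℝ)/3 < 1 - 2*l := by linarith
  have h1 : 0 < x - (1-2*l) := by linarith
  have h2 : 0 < x^2 + x*(1-2*l) + (1-2*l)^2 - x - (1-2*l) := by nlinarith
  nlinarith [mul_pos h1 h2]

lemma cube_dec {u v : ℝ} (hu : 2/3 ≤ u) (huv : u < v) (hv : v ≤ 1) :
    v^2*(1-v) < u^2*(1-u) := by
  have h1 : 0 < v - u := by linarith
  have h2 : 0 < u^2 + u*v + v^2 - u - v := by nlinarith
  nlinarith [mul_pos h1 h2]

lemma cube_inj {b d : ℝ} (hb : 2/3 < b) (hb1 : b ≤ 1) (hd : 2/3 < d) (hd1 : d ≤ 1)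
    (h : b^2*(1-b) = d^2*(1-d)) : b = d := by
  rcases lt_trichotomy b d with hbd | hbd | hbd
  · exact absurd h (ne_of_gt (cube_dec (le_of_lt hb) hbd hd1))
  · exact hbd
  · exact absurd h (ne_of_lt (cube_dec (le_of_lt hd) hbd hb1))


lemma mulK_mem {w K : ℝ} (hw : w ∈ Icc (0:ℝ) 1) (hK : K ∈ Icc (0:ℝ) 1) :
    w * K ∈ Icc (0:ℝ) 1 :=
  ⟨mul_nonneg hw.1 hK.1, mul_le_one₀ hw.2 hK.1 hK.2⟩

lemma slice_max {l : ℝ} (hl0 : 0 < l) (hl6 : l < 1/6) {C C' : ℝ → ℝ}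
    (hC : ∀ t ∈ Set.Icc (0 : ℝ) 1, HasDerivWithinAt C (C' t) (Set.Icc (0 : ℝ) 1) t)
    (hC' : ContinuousOn C' (Set.Icc (0 : ℝ) 1))
    (hU : StrictMonoOn (fun t => t * C' t) (Set.Icc (0 : ℝ) 1))
    {K u : ℝ} (hK : K ∈ Icc (0:ℝ) 1) (hu : u ∈ Icc (0:ℝ) 1) (hne : lam l u ≠ K) :
    ∃ w ∈ Icc (0:ℝ) 1, Fe l C' u - C (u * K) < Fe l C' w - C (w * K) := by
  set g : ℝ → ℝ := fun w => Fe l C' w - C (w * K) with hg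
  have hCcont : ContinuousOn C (Icc (0:ℝ) 1) := fun t ht => (hC t ht).continuousWithinAt
  have hgcont : ContinuousOn g (Icc (0:ℝ) 1) := by
    apply ((Fe_cont hl0 hl6 hC').continuousOn).sub
    exact hCcont.comp (continuous_mul_right K).continuousOn (fun w hw => mulK_mem hw hK)
  have hderiv : ∀ w ∈ Ioo (0:ℝ) 1,
      HasDerivAt g (lam l w * C' (max 0 (min 1 (w * lam l w))) - C' (w*K) * K) w := by
    intro w hw
    have hwm : w ∈ Icc (0:ℝ) 1 := ⟨le_of_lt hw.1, le_of_lt hw.2⟩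
    have hCwK : HasDerivWithinAt (fun w => C (w * K)) (C' (w*K) * K) (Icc (0:ℝ) 1) w :=
      (hC (w*K) (mulK_mem hwm hK)).comp w ((hasDerivAt_mul_const K).hasDerivWithinAt)
        (fun y hy => mulK_mem hy hK)
    exact (Fe_hasDerivAt hl0 hl6 hC' w).sub
      (hCwK.hasDerivAt (Icc_mem_nhds hw.1 hw.2))
  rcases hne.lt_or_gt with hlt | hgt
  · -- lam l u < K : move left
    have hu0 : 0 < u := by
      rcases eq_or_lt_of_le hu.1 with h | h
      · exfalso; rw [← h] at hlt; rw [lam_zero hl0 hl6] at hlt; linarith [hK.2]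
      · exact h
    have hO : IsOpen {w : ℝ | lam l w < K} := isOpen_lt (lam_cont hl0 hl6) continuous_const
    obtain ⟨ε, hε, hball⟩ := Metric.isOpen_iff.1 hO u hlt
    set δ := min (ε/2) u with hδdef
    have hδ : 0 < δ := lt_min (by linarith) hu0
    have hsub : Icc (u-δ) u ⊆ Icc (0:ℝ) 1 := by
      apply Icc_subset_Icc
      · have : δ ≤ u := min_le_right _ _
        linarith
      · exact hu.2
    have hanti : StrictAntiOn g (Icc (u-δ) u) := by
      apply strictAntiOn_of_deriv_neg (convex_Icc _ _) (hgcont.mono hsub)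
      intro w hw
      rw [interior_Icc] at hw
      have hw01 : w ∈ Ioo (0:ℝ) 1 := by
        constructor
        · have : δ ≤ u := min_le_right _ _
          linarith [hw.1]
        · exact lt_of_lt_of_le hw.2 hu.2
      rw [(hderiv w hw01).deriv]
      have hwb : lam l w < K := by
        apply hball
        rw [Metric.mem_ball, Real.dist_eq, abs_lt]
        constructor <;> [skip; skip] <;>
          · have h1 : δ ≤ ε/2 := min_le_left _ _
            have := hw.1; have := hw.2
            linarith
      have hwm : w ∈ Icc (0:ℝ) 1 := ⟨le_of_lt hw01.1, le_of_lt hw01.2⟩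
      have hGm : w * lam l w ∈ Icc (0:ℝ) 1 := G_mem hl0 hl6 hwm
      rw [proj_eq hGm]
      have hmul : w * lam l w < w * K := mul_lt_mul_of_pos_left hwb hw01.1
      have hpsi := hU hGm (mulK_mem hwm hK) hmul
      simp only at hpsi
      nlinarith [hw01.1]
    have hmem1 : u - δ ∈ Icc (u-δ) u := ⟨le_rfl, by linarith⟩
    have hmem2 : u ∈ Icc (u-δ) u := ⟨by linarith, le_rfl⟩
    exact ⟨u - δ, hsub hmem1, hanti hmem1 hmem2 (by linarith)⟩
  · -- K < lam l u : move right
    have hu1 : u < 1 := by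
      rcases eq_or_lt_of_le hu.2 with h | h
      · exfalso; rw [h] at hgt; rw [lam_one hl0 hl6] at hgt; linarith [hK.1]
      · exact h
    have hO : IsOpen {w : ℝ | K < lam l w} := isOpen_lt continuous_const (lam_cont hl0 hl6)
    obtain ⟨ε, hε, hball⟩ := Metric.isOpen_iff.1 hO u hgt
    set δ := min (ε/2) (1-u) with hδdef
    have hδ : 0 < δ := lt_min (by linarith) (by linarith)
    have hsub : Icc u (u+δ) ⊆ Icc (0:ℝ) 1 := by
      apply Icc_subset_Icc
      · exact hu.1
      · have : δ ≤ 1 - u := min_le_right _ _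
        linarith
    have hmono : StrictMonoOn g (Icc u (u+δ)) := by
      apply strictMonoOn_of_deriv_pos (convex_Icc _ _) (hgcont.mono hsub)
      intro w hw
      rw [interior_Icc] at hw
      have hw01 : w ∈ Ioo (0:ℝ) 1 := by
        constructor
        · exact lt_of_le_of_lt hu.1 hw.1
        · have : δ ≤ 1 - u := min_le_right _ _
          linarith [hw.2]
      rw [(hderiv w hw01).deriv]
      have hwb : K < lam l w := by
        apply hball
        rw [Metric.mem_ball, Real.dist_eq, abs_lt]
        constructor <;>
          · have h1 : δ ≤ ε/2 := min_le_left _ _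
            have := hw.1; have := hw.2
            linarith
      have hwm : w ∈ Icc (0:ℝ) 1 := ⟨le_of_lt hw01.1, le_of_lt hw01.2⟩
      have hGm : w * lam l w ∈ Icc (0:ℝ) 1 := G_mem hl0 hl6 hwm
      rw [proj_eq hGm]
      have hmul : w * K < w * lam l w := mul_lt_mul_of_pos_left hwb hw01.1
      have hpsi := hU (mulK_mem hwm hK) hGm hmul
      simp only at hpsi
      nlinarith [hw01.1]
    have hmem1 : u ∈ Icc u (u+δ) := ⟨le_rfl, by linarith⟩
    have hmem2 : u + δ ∈ Icc u (u+δ) := ⟨by linarith, le_rfl⟩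
    exact ⟨u + δ, hsub hmem2, hmono hmem1 hmem2 (by linarith)⟩

lemma factB {l : ℝ} (hl0 : 0 < l) (hl6 : l < 1/6) {x y z : ℝ}
    (hx : x ∈ Icc (0:ℝ) 1) (hy : y ∈ Icc (0:ℝ) 1) (hz : z ∈ Icc (0:ℝ) 1)
    (e1 : lam l x = y*z) (e2 : lam l y = x*z) (e3 : lam l z = x*y)
    (hxl : x < l) : y = 1 - 2*x ∧ z = 1 - 2*x := by
  have hr23 : (2:ℝ)/3 < 1 - 2*l := by linarith
  have hx2 : lam l x = (1-2*x)^2 := lam_left hl0 hl6 (le_of_lt hxl)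
  have hyz : y*z = (1-2*x)^2 := by rw [← hx2, e1]
  have hsq : (1-2*l)^2 < (1-2*x)^2 := by nlinarith [hx.1]
  have hbig : ∀ w v : ℝ, w ∈ Icc (0:ℝ) 1 → v ∈ Icc (0:ℝ) 1 → w*v = (1-2*x)^2 →
      lam l w = x*v → 1 - 2*l < w := by
    intro w v hw hv hwv ew
    by_contra h
    push_neg at h
    have hw_l : l < w := by nlinarith [hw.1, hv.2, hw.2]
    have hmid := lam_mid hl0 hl6 (le_of_lt hw_l) h
    have hw0 : w ≠ 0 := ne_of_gt (lt_trans hl0 hw_l)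
    rw [hmid] at ew
    have hc : l*(1-2*l)^2 = x*(w*v) := by
      field_simp at ew
      linarith [ew]
    rw [hwv] at hc
    have := Gleft_lt hl6 hx.1 hxl
    linarith
  have hy_big : 1 - 2*l < y := hbig y z hy hz hyz e2
  have hz_big : 1 - 2*l < z := hbig z y hz hy (by linarith [hyz, mul_comm y z]) e3
  have hyR : lam l y = y*(1-y)/2 := lam_right hl0 hl6 (le_of_lt hy_big)
  have hzR : lam l z = z*(1-z)/2 := lam_right hl0 hl6 (le_of_lt hz_big)
  rw [hyR] at e2
  rw [hzR] at e3
  have hGeq : y^2*(1-y) = z^2*(1-z) := by linear_combination 2*y*e2 - 2*z*e3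
  have hy_eq_z : y = z := cube_inj (lt_trans hr23 hy_big) hy.2 (lt_trans hr23 hz_big) hz.2 hGeq
  have hysq : y^2 = (1-2*x)^2 := by rw [← hy_eq_z] at hyz; nlinarith [hyz]
  have hfac : (y - (1-2*x)) * (y + (1-2*x)) = 0 := by linear_combination hysq
  have hy_eq : y = 1-2*x := by
    rcases mul_eq_zero.1 hfac with h | h
    · linarith
    · exfalso
      have h1 : 0 < y := by linarith
      have h2 : (0:ℝ) < 1 - 2*x := by nlinarith [hxl, hl6]
      linarith
  exact ⟨hy_eq, hy_eq_z ▸ hy_eq⟩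

lemma factC {l : ℝ} (hl0 : 0 < l) (hl6 : l < 1/6) {x y z : ℝ}
    (hx : x ∈ Icc (0:ℝ) 1) (hy : y ∈ Icc (0:ℝ) 1) (hz : z ∈ Icc (0:ℝ) 1)
    (e1 : lam l x = y*z) (e2 : lam l y = x*z) (e3 : lam l z = x*y)
    (hx1 : l ≤ x) (hx2 : x ≤ 1 - 2*l) :
    (l ≤ y ∧ y ≤ 1 - 2*l) ∧ (l ≤ z ∧ z ≤ 1 - 2*l) ∧ x*y*z = l*(1-2*l)^2 := by
  have hx0 : 0 < x := lt_of_lt_of_le hl0 hx1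
  have hmid := lam_mid hl0 hl6 hx1 hx2
  have e1' : l * (1 - 2*l)^2 / x = y * z := by rw [← hmid]; exact e1
  have hprod : x*y*z = l*(1-2*l)^2 := by
    rw [div_eq_iff (ne_of_gt hx0)] at e1'
    linear_combination -e1'
  have hside : ∀ w v : ℝ, w ∈ Icc (0:ℝ) 1 → v ∈ Icc (0:ℝ) 1 →
      lam l w = x*v → lam l v = x*w → lam l x = w*v → x*w*v = l*(1-2*l)^2 →
      l ≤ w ∧ w ≤ 1 - 2*l := by
    intro w v hw hv ew ev exwv hp
    constructor
    · by_contra h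
      push_neg at h
      obtain ⟨hA, hB⟩ := factB hl0 hl6 hw hx hv ew exwv (by rw [ev]; ring) h
      -- hA : x = 1 - 2*w, contradiction with x ≤ 1-2l and w < l
      linarith
    · by_contra h
      push_neg at h
      have hwR := lam_right hl0 hl6 (le_of_lt h)
      rw [hwR] at ew
      have : w*(w*(1-w)/2) < l*(1-2*l)^2 := Gright_lt hl0 hl6 h hw.2
      nlinarith [ew, hp]
  refine ⟨hside y z hy hz e2 e3 e1 hprod, hside z y hz hy e3 e2
    (by rw [e1]; ring) (by rw [← hprod]; ring), hprod⟩

lemma factE {l : ℝ} (hl0 : 0 < l) (hl6 : l < 1/6) {x y z : ℝ}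
    (hx : x ∈ Icc (0:ℝ) 1) (hy : y ∈ Icc (0:ℝ) 1) (hz : z ∈ Icc (0:ℝ) 1)
    (e1 : lam l x = y*z) (e2 : lam l y = x*z) (e3 : lam l z = x*y)
    (hx1 : 1 - 2*l < x) (hy1 : 1 - 2*l < y) (hz1 : 1 - 2*l < z) : False := by
  have hr23 : (2:ℝ)/3 < 1 - 2*l := by linarith
  rw [lam_right hl0 hl6 (le_of_lt hx1)] at e1
  rw [lam_right hl0 hl6 (le_of_lt hy1)] at e2
  rw [lam_right hl0 hl6 (le_of_lt hz1)] at e3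
  have hxy : x^2*(1-x) = y^2*(1-y) := by linear_combination 2*x*e1 - 2*y*e2
  have hxz : x^2*(1-x) = z^2*(1-z) := by linear_combination 2*x*e1 - 2*z*e3
  have hxeqy : x = y := cube_inj (lt_trans hr23 hx1) hx.2 (lt_trans hr23 hy1) hy.2 hxy
  have hxeqz : x = z := cube_inj (lt_trans hr23 hx1) hx.2 (lt_trans hr23 hz1) hz.2 hxz
  rw [← hxeqy, ← hxeqz] at e1
  -- e1 : x*(1-x)/2 = x*x
  have hx23 : (2:ℝ)/3 < x := lt_trans hr23 hx1
  nlinarith [e1]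

lemma crit_mem {l : ℝ} (hl0 : 0 < l) (hl6 : l < 1/6) {x y z : ℝ}
    (hx : x ∈ Icc (0:ℝ) 1) (hy : y ∈ Icc (0:ℝ) 1) (hz : z ∈ Icc (0:ℝ) 1)
    (e1 : lam l x = y*z) (e2 : lam l y = x*z) (e3 : lam l z = x*y) :
    ((x, y, z) : ℝ × ℝ × ℝ) ∈ Mset l := by
  rcases lt_or_ge x l with h | h
  · obtain ⟨hy', hz'⟩ := factB hl0 hl6 hx hy hz e1 e2 e3 h
    exact Or.inl ⟨x, hx.1, le_of_lt h, Or.inl (by rw [hy', hz'])⟩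
  · rcases le_or_gt x (1 - 2*l) with h2 | h2
    · obtain ⟨⟨hy1, hy2⟩, ⟨hz1, hz2⟩, hprod⟩ := factC hl0 hl6 hx hy hz e1 e2 e3 h h2
      exact Or.inr ⟨h, h2, hy1, hy2, hz1, hz2, hprod⟩
    · rcases lt_or_ge y l with hyl | hyl
      · obtain ⟨hx', hz'⟩ := factB hl0 hl6 hy hx hz e2 e1 (by rw [e3]; ring) hyl
        exact Or.inl ⟨y, hy.1, le_of_lt hyl, Or.inr (Or.inl (by rw [hx', hz']))⟩
      · rcases le_or_gt y (1 - 2*l) with hy2 | hy2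
        · obtain ⟨⟨hxx1, hxx2⟩, -, -⟩ := factC hl0 hl6 hy hx hz e2 e1 (by rw [e3]; ring) hyl hy2
          linarith
        · rcases lt_or_ge z l with hzl | hzl
          · obtain ⟨hx', hy'⟩ := factB hl0 hl6 hz hx hy e3 (by rw [e1]; ring)
              (by rw [e2]; ring) hzl
            exact Or.inl ⟨z, hz.1, le_of_lt hzl, Or.inr (Or.inr (by rw [hx', hy']))⟩
          · rcases le_or_gt z (1 - 2*l) with hz2 | hz2
            · obtain ⟨⟨hxx1, hxx2⟩, -, -⟩ := factC hl0 hl6 hz hx hy e3 (by rw [e1]; ring)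
                (by rw [e2]; ring) hzl hz2
              linarith
            · exact absurd (factE hl0 hl6 hx hy hz e1 e2 e3 h2 hy2 hz2) (fun f => f)


lemma c_mem {l : ℝ} (hl0 : 0 < l) (hl6 : l < 1/6) : l*(1-2*l)^2 ∈ Icc (0:ℝ) 1 := by
  constructor
  · positivity
  · nlinarith

lemma Fe_log {l : ℝ} (hl0 : 0 < l) (hl6 : l < 1/6) {C' : ℝ → ℝ}
    (hC' : ContinuousOn C' (Icc (0:ℝ) 1)) :
    ∀ x ∈ Icc l (1-2*l), Fe l C' x =
      Fe l C' l + (l*(1-2*l)^2) * C' (l*(1-2*l)^2) * (Real.log x - Real.log l) := by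
  set c := l*(1-2*l)^2 with hc_def
  have hc : c ∈ Icc (0:ℝ) 1 := c_mem hl0 hl6
  set h : ℝ → ℝ := fun x => Fe l C' x - c * C' c * Real.log x with hh
  have key : ∀ x ∈ Icc l (1-2*l), h x = h l := by
    apply constant_of_has_deriv_right_zero
    · apply ((Fe_cont hl0 hl6 hC').continuousOn).sub
      apply ContinuousOn.mul continuousOn_const
      apply Real.continuousOn_log.mono
      intro x hx
      simp only [mem_compl_iff, mem_singleton_iff]
      have : l ≤ x := hx.1
      intro h0
      rw [h0] at this
      linarith
    · intro x hx
      have hx0 : 0 < x := lt_of_lt_of_le hl0 hx.1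
      have hlam : lam l x = c / x := lam_mid hl0 hl6 hx.1 (le_of_lt hx.2)
      have hxlam : x * lam l x = c := by
        rw [hlam]; field_simp
      have hFe := Fe_hasDerivAt hl0 hl6 hC' x
      rw [hxlam, proj_eq hc, hlam] at hFe
      have hlog : HasDerivAt (fun x => c * C' c * Real.log x) (c * C' c * x⁻¹) x :=
        (Real.hasDerivAt_log (ne_of_gt hx0)).const_mul (c * C' c)
      have comb := hFe.sub hlog
      have h0 : c / x * C' c - c * C' c * x⁻¹ = 0 := by
        field_simp
        ring
      rw [h0] at comb
      exact comb.hasDerivWithinAt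
  intro x hx
  have h1 := key x hx
  simp only [hh] at h1
  linarith [h1]

lemma seg_const {l : ℝ} (hl0 : 0 < l) (hl6 : l < 1/6) {C C' : ℝ → ℝ}
    (hC : ∀ t ∈ Set.Icc (0 : ℝ) 1, HasDerivWithinAt C (C' t) (Set.Icc (0 : ℝ) 1) t)
    (hC' : ContinuousOn C' (Set.Icc (0 : ℝ) 1)) :
    ∀ t ∈ Icc (0:ℝ) l, Fe l C' t + 2*Fe l C' (1-2*t) - C (t*(1-2*t)^2) =
      Fe l C' l + 2*Fe l C' (1-2*l) - C (l*(1-2*l)^2) := by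
  set θ : ℝ → ℝ := fun t => Fe l C' t + 2*Fe l C' (1-2*t) - C (t*(1-2*t)^2) with hθ
  have gval : ∀ t ∈ Icc (0:ℝ) l, t*(1-2*t)^2 ∈ Icc (0:ℝ) 1 := by
    intro t ht
    constructor
    · have h1 : (0:ℝ) ≤ (1-2*t)^2 := sq_nonneg _
      exact mul_nonneg ht.1 h1
    · nlinarith [ht.1, ht.2, sq_nonneg (1-2*t)]
  have H : ∀ t ∈ Icc (0:ℝ) l, HasDerivWithinAt θ 0 (Icc (0:ℝ) l) t := by
    intro t ht
    have hgt : t*(1-2*t)^2 ∈ Icc (0:ℝ) 1 := gval t ht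
    -- derivative of Fe at t
    have hlamt : lam l t = (1-2*t)^2 := lam_left hl0 hl6 ht.2
    have hGt : t * lam l t = t*(1-2*t)^2 := by rw [hlamt]
    have A := Fe_hasDerivAt hl0 hl6 hC' t
    rw [hGt, proj_eq hgt, hlamt] at A
    -- derivative of Fe ∘ (1-2t)
    have hinner : HasDerivAt (fun t : ℝ => 1 - 2*t) (-2) t := by
      simpa using (HasDerivAt.const_mul (2:ℝ) (hasDerivAt_id t)).const_sub 1
    have hr : 1 - 2*l ≤ 1 - 2*t := by linarith [ht.2]
    have hlamr : lam l (1-2*t) = (1-2*t)*(1-(1-2*t))/2 := lam_right hl0 hl6 hr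
    have hG2 : (1-2*t) * lam l (1-2*t) = t*(1-2*t)^2 := by rw [hlamr]; ring
    have B := (Fe_hasDerivAt hl0 hl6 hC' (1-2*t)).comp t hinner
    simp only [Function.comp_def] at B
    rw [hG2, proj_eq hgt, hlamr] at B
    -- derivative of C ∘ g
    have h2 : HasDerivAt (fun t : ℝ => (1-2*t)^2) (2*(1-2*t)^1*(-2)) t := hinner.pow 2
    have h3 : HasDerivAt (fun t : ℝ => t*(1-2*t)^2)
        (1*(1-2*t)^2 + t*(2*(1-2*t)^1*(-2))) t := (hasDerivAt_id t).mul h2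
    have mapsto : MapsTo (fun t : ℝ => t*(1-2*t)^2) (Icc (0:ℝ) l) (Icc (0:ℝ) 1) :=
      fun s hs => gval s hs
    have Ccomp := (hC (t*(1-2*t)^2) hgt).comp t h3.hasDerivWithinAt mapsto
    have comb := ((A.hasDerivWithinAt.add (B.hasDerivWithinAt.const_mul 2)).sub Ccomp :
      HasDerivWithinAt θ _ (Icc (0:ℝ) l) t)
    have h0 : (1-2*t)^2 * C' (t*(1-2*t)^2) +
        2 * ((1-2*t)*(1-(1-2*t))/2 * C' (t*(1-2*t)^2) * (-2)) -
        C' (t*(1-2*t)^2) * (1*(1-2*t)^2 + t*(2*(1-2*t)^1*(-2))) = 0 := by ring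
    rw [h0] at comb
    exact comb
  have hdiff : DifferentiableOn ℝ θ (Icc (0:ℝ) l) :=
    fun t ht => ((H t ht).differentiableWithinAt)
  have hderiv0 : ∀ t ∈ Ico (0:ℝ) l, derivWithin θ (Icc (0:ℝ) l) t = 0 := by
    intro t ht
    have htm : t ∈ Icc (0:ℝ) l := ⟨ht.1, le_of_lt ht.2⟩
    exact (H t htm).derivWithin ((uniqueDiffOn_Icc hl0) t htm)
  have key := constant_of_derivWithin_zero hdiff hderiv0
  intro t ht
  have h1 := key t ht
  have h2 := key l ⟨le_of_lt hl0, le_rfl⟩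
  simp only [hθ] at h1 h2
  linarith [h1, h2]

lemma Mset_sub {l : ℝ} (hl0 : 0 < l) (hl6 : l < 1/6) {p : ℝ × ℝ × ℝ} (hp : p ∈ Mset l) :
    p.1 ∈ Icc (0:ℝ) 1 ∧ p.2.1 ∈ Icc (0:ℝ) 1 ∧ p.2.2 ∈ Icc (0:ℝ) 1 := by
  rcases hp with ⟨t, ht0, htl, hcase⟩ | ⟨h1, h2, h3, h4, h5, h6, _⟩
  · have hta : t ∈ Icc (0:ℝ) 1 := ⟨ht0, by linarith⟩
    have htb : 1 - 2*t ∈ Icc (0:ℝ) 1 := ⟨by linarith, by linarith⟩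
    rcases hcase with h | h | h <;> rw [h] <;> exact ⟨by assumption, by assumption, by assumption⟩
  · exact ⟨⟨by linarith, by linarith⟩, ⟨by linarith, by linarith⟩, ⟨by linarith, by linarith⟩⟩

lemma T_const {l : ℝ} (hl0 : 0 < l) (hl6 : l < 1/6) {C C' : ℝ → ℝ}
    (hC : ∀ t ∈ Set.Icc (0 : ℝ) 1, HasDerivWithinAt C (C' t) (Set.Icc (0 : ℝ) 1) t)
    (hC' : ContinuousOn C' (Set.Icc (0 : ℝ) 1)) {p : ℝ × ℝ × ℝ} (hp : p ∈ Mset l) :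
    Fe l C' p.1 + Fe l C' p.2.1 + Fe l C' p.2.2 - C (p.1 * p.2.1 * p.2.2) =
      Fe l C' l + 2*Fe l C' (1-2*l) - C (l*(1-2*l)^2) := by
  rcases hp with ⟨t, ht0, htl, hcase⟩ | ⟨h1, h2, h3, h4, h5, h6, hprod⟩
  · have hseg := seg_const hl0 hl6 hC hC' t ⟨ht0, htl⟩
    rcases hcase with h | h | h <;> rw [h] <;> simp only
    · have harg : t*(1-2*t)*(1-2*t) = t*(1-2*t)^2 := by ring
      rw [harg]; linarith
    · have harg : (1-2*t)*t*(1-2*t) = t*(1-2*t)^2 := by ring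
      rw [harg]; linarith
    · have harg : (1-2*t)*(1-2*t)*t = t*(1-2*t)^2 := by ring
      rw [harg]; linarith
  · have hx := Fe_log hl0 hl6 hC' p.1 ⟨h1, h2⟩
    have hy := Fe_log hl0 hl6 hC' p.2.1 ⟨h3, h4⟩
    have hz := Fe_log hl0 hl6 hC' p.2.2 ⟨h5, h6⟩
    have hr := Fe_log hl0 hl6 hC' (1-2*l) ⟨by linarith, le_rfl⟩
    have hx0 : (0:ℝ) < p.1 := lt_of_lt_of_le hl0 h1
    have hy0 : (0:ℝ) < p.2.1 := lt_of_lt_of_le hl0 h3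
    have hz0 : (0:ℝ) < p.2.2 := lt_of_lt_of_le hl0 h5
    have hr0 : (0:ℝ) < 1 - 2*l := by linarith
    have hsum : Real.log p.1 + Real.log p.2.1 + Real.log p.2.2 =
        Real.log l + 2 * Real.log (1-2*l) := by
      rw [← Real.log_mul (ne_of_gt hx0) (ne_of_gt hy0),
        ← Real.log_mul (ne_of_gt (mul_pos hx0 hy0)) (ne_of_gt hz0), hprod]
      rw [show l*(1-2*l)^2 = l * ((1-2*l)*(1-2*l)) from by ring,
        Real.log_mul (ne_of_gt hl0) (ne_of_gt (mul_pos hr0 hr0)),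
        Real.log_mul (ne_of_gt hr0) (ne_of_gt hr0)]
      ring
    rw [hprod, hx, hy, hz, hr]
    linear_combination (l*(1-2*l)^2 * C' (l*(1-2*l)^2)) * hsum


/-- Every point of `M` is a maximum point of
`T(x,y,z) = f̂(x) + f̂(y) + f̂(z) − C(xyz)` on `[0,1]³`. -/
theorem M_subset_argmax (C C' : ℝ → ℝ)
    (hC : ∀ t ∈ Set.Icc (0 : ℝ) 1, HasDerivWithinAt C (C' t) (Set.Icc (0 : ℝ) 1) t)
    (hC' : ContinuousOn C' (Set.Icc (0 : ℝ) 1))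
    (hU : StrictMonoOn (fun t => t * C' t) (Set.Icc (0 : ℝ) 1))
    (l : ℝ) (hl : l ∈ Set.Ioo (0 : ℝ) (1/6)) :
    ∀ p ∈ Mset l, ∀ a ∈ Set.Icc (0 : ℝ) 1, ∀ b ∈ Set.Icc (0 : ℝ) 1, ∀ d ∈ Set.Icc (0 : ℝ) 1,
      fhat l C' a + fhat l C' b + fhat l C' d - C (a * b * d) ≤
        fhat l C' p.1 + fhat l C' p.2.1 + fhat l C' p.2.2 - C (p.1 * p.2.1 * p.2.2) := by
  obtain ⟨hl0, hl6⟩ := hl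
  intro p hp a ha b hb d hd
  set Tf : ℝ × ℝ × ℝ → ℝ :=
    fun q => Fe l C' q.1 + Fe l C' q.2.1 + Fe l C' q.2.2 - C (q.1 * q.2.1 * q.2.2) with hTf
  set S : Set (ℝ × ℝ × ℝ) := Icc (0:ℝ) 1 ×ˢ (Icc (0:ℝ) 1 ×ˢ Icc (0:ℝ) 1) with hS
  have hmemS : ∀ {q : ℝ × ℝ × ℝ}, q ∈ S →
      q.1 ∈ Icc (0:ℝ) 1 ∧ q.2.1 ∈ Icc (0:ℝ) 1 ∧ q.2.2 ∈ Icc (0:ℝ) 1 := by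
    intro q hq
    exact ⟨hq.1, hq.2.1, hq.2.2⟩
  have hmkS : ∀ {x y z : ℝ}, x ∈ Icc (0:ℝ) 1 → y ∈ Icc (0:ℝ) 1 → z ∈ Icc (0:ℝ) 1 →
      ((x,y,z) : ℝ × ℝ × ℝ) ∈ S := by
    intro x y z hx hy hz
    exact ⟨hx, hy, hz⟩
  have hCcont : ContinuousOn C (Icc (0:ℝ) 1) := fun t ht => (hC t ht).continuousWithinAt
  have hScomp : IsCompact S := isCompact_Icc.prod (isCompact_Icc.prod isCompact_Icc)
  have hSne : S.Nonempty := ⟨(0,0,0), hmkS (left_mem_Icc.2 zero_le_one)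
    (left_mem_Icc.2 zero_le_one) (left_mem_Icc.2 zero_le_one)⟩
  have hTcont : ContinuousOn Tf S := by
    apply ContinuousOn.sub
    · apply ContinuousOn.add
      · apply ContinuousOn.add
        · exact ((Fe_cont hl0 hl6 hC').comp continuous_fst).continuousOn
        · exact ((Fe_cont hl0 hl6 hC').comp (continuous_fst.comp continuous_snd)).continuousOn
      · exact ((Fe_cont hl0 hl6 hC').comp (continuous_snd.comp continuous_snd)).continuousOn
    · apply hCcont.comp
        ((continuous_fst.mul (continuous_fst.comp continuous_snd)).mul
          (continuous_snd.comp continuous_snd)).continuousOn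
      intro q hq
      obtain ⟨h1, h2, h3⟩ := hmemS hq
      exact mulK_mem (mulK_mem h1 h2) h3
  obtain ⟨q, hqS, hqmax⟩ := hScomp.exists_isMaxOn hSne hTcont
  obtain ⟨hq1, hq2, hq3⟩ := hmemS hqS
  have e1 : lam l q.1 = q.2.1 * q.2.2 := by
    by_contra hne
    obtain ⟨w, hw, hlt⟩ := slice_max hl0 hl6 hC hC' hU (mulK_mem hq2 hq3) hq1 hne
    have hle : Tf (w, q.2.1, q.2.2) ≤ Tf q := hqmax (hmkS hw hq2 hq3)
    simp only [hTf] at hle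
    have harg1 : q.1*q.2.1*q.2.2 = q.1*(q.2.1*q.2.2) := by ring
    have harg2 : w*q.2.1*q.2.2 = w*(q.2.1*q.2.2) := by ring
    rw [harg1] at hle
    rw [harg2] at hle
    linarith
  have e2 : lam l q.2.1 = q.1 * q.2.2 := by
    by_contra hne
    obtain ⟨w, hw, hlt⟩ := slice_max hl0 hl6 hC hC' hU (mulK_mem hq1 hq3) hq2 hne
    have hle : Tf (q.1, w, q.2.2) ≤ Tf q := hqmax (hmkS hq1 hw hq3)
    simp only [hTf] at hle
    have harg1 : q.1*q.2.1*q.2.2 = q.2.1*(q.1*q.2.2) := by ring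
    have harg2 : q.1*w*q.2.2 = w*(q.1*q.2.2) := by ring
    rw [harg1] at hle
    rw [harg2] at hle
    linarith
  have e3 : lam l q.2.2 = q.1 * q.2.1 := by
    by_contra hne
    obtain ⟨w, hw, hlt⟩ := slice_max hl0 hl6 hC hC' hU (mulK_mem hq1 hq2) hq3 hne
    have hle : Tf (q.1, q.2.1, w) ≤ Tf q := hqmax (hmkS hq1 hq2 hw)
    simp only [hTf] at hle
    have harg1 : q.1*q.2.1*q.2.2 = q.2.2*(q.1*q.2.1) := by ring
    have harg2 : q.1*q.2.1*w = w*(q.1*q.2.1) := by ring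
    rw [harg1] at hle
    rw [harg2] at hle
    linarith
  have hqM : q ∈ Mset l := crit_mem hl0 hl6 hq1 hq2 hq3 e1 e2 e3
  obtain ⟨hp1, hp2, hp3⟩ := Mset_sub hl0 hl6 hp
  rw [fhat_eq_Fe hl0 hl6 C' ha, fhat_eq_Fe hl0 hl6 C' hb, fhat_eq_Fe hl0 hl6 C' hd,
    fhat_eq_Fe hl0 hl6 C' hp1, fhat_eq_Fe hl0 hl6 C' hp2, fhat_eq_Fe hl0 hl6 C' hp3]
  have habd : Tf (a, b, d) ≤ Tf q := hqmax (hmkS ha hb hd)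
  simp only [hTf] at habd
  have hcq := T_const hl0 hl6 hC hC' hqM
  have hcp := T_const hl0 hl6 hC hC' hp
  linarith
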